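/- Let X be a metric space and p ≥ 1. For all Radon probability measures μ, μ', ν, ν' on X with finite moments of order p and all r ∈ [0,1], the pointwise convex combinations satisfy W_p(μ +_r ν, μ' +_r ν')^p ≤ r·W_p(μ, μ')^p + (1−r)·W_p(ν, ν')^p. Consequently P_p(X), with the standard binary convex combination operations, forms a Wasserstein barycentric algebra of order p. -/

import Mathlib

open MeasureTheory Filter Topology
open scoped ENNReal

noncomputable section

/-- The support of a Borel measure: the set of points all of whose open
neighbourhoods have positive measure. -/
def msupport {X : Type*} [TopologicalSpace X] [MeasurableSpace X]
    (μ : Measure X) : Set X :=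
  {x | ∀ U : Set X, IsOpen U → x ∈ U → 0 < μ U}

/-- `γ` is a coupling of `μ` and `ν`: its marginals along the two projections
are `μ` and `ν` respectively. -/
def IsCoupling {X : Type*} [MeasurableSpace X]
    (γ : Measure (X × X)) (μ ν : Measure X) : Prop :=
  Measure.map Prod.fst γ = μ ∧ Measure.map Prod.snd γ = ν

/-- A measure is Radon if every Borel set is compact inner regular for it. -/
def IsRadon {X : Type*} [TopologicalSpace X] [MeasurableSpace X]
    (μ : Measure X) : Prop :=
  ∀ B : Set X, MeasurableSet B →
    μ B = ⨆ (K : Set X) (_ : IsCompact K) (_ : K ⊆ B), μ K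

/-- A measure has finite moment of order `p` if `∫ d(x₀, x)^p dμ(x) < ∞` for
some (equivalently, by the triangle inequality, every) point `x₀`. -/
def HasFiniteMoment {X : Type*} [PseudoEMetricSpace X] [MeasurableSpace X]
    (p : ℝ) (μ : Measure X) : Prop :=
  ∃ x₀ : X, ∫⁻ x, edist x₀ x ^ p ∂μ ≠ ⊤

/-- The Wasserstein distance of order `p`:
`W_p(μ, ν) = (inf_γ ∫ d(x, y)^p dγ(x, y))^{1/p}`, the infimum taken over
couplings `γ` of `μ` and `ν`. -/
def Wp {X : Type*} [PseudoEMetricSpace X] [MeasurableSpace X]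
    (p : ℝ) (μ ν : Measure X) : ℝ≥0∞ :=
  (⨅ (γ : Measure (X × X)) (_ : IsCoupling γ μ ν), ∫⁻ z, edist z.1 z.2 ^ p ∂γ) ^ (1 / p)

/-- Membership in `P_p(X)`: a Radon probability measure with finite moment of
order `p`. -/
def InPp {X : Type*} [MetricSpace X] [MeasurableSpace X] (p : ℝ) (μ : Measure X) : Prop :=
  IsProbabilityMeasure μ ∧ IsRadon μ ∧ HasFiniteMoment p μ

/-- The standard pointwise convex combination of measures:
`(μ +_r ν)(B) = r·μ(B) + (1 − r)·ν(B)`. -/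
def mcomb {X : Type*} [MeasurableSpace X] (r : ℝ) (μ ν : Measure X) : Measure X :=
  ENNReal.ofReal r • μ + ENNReal.ofReal (1 - r) • ν

/-! ### Auxiliary lemmas -/

section Aux

variable {X : Type*} [MeasurableSpace X]

lemma isCoupling_prod (μ ν : Measure X) [IsProbabilityMeasure μ] [IsProbabilityMeasure ν] :
    IsCoupling (μ.prod ν) μ ν := by
  constructor
  · simp [Measure.map_fst_prod]
  · simp [Measure.map_snd_prod]

lemma isCoupling_comb (a b : ℝ≥0∞) {γ1 γ2 : Measure (X × X)}
    {μ μ' ν ν' : Measure X} (h1 : IsCoupling γ1 μ μ') (h2 : IsCoupling γ2 ν ν') :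
    IsCoupling (a • γ1 + b • γ2) (a • μ + b • ν) (a • μ' + b • ν') := by
  obtain ⟨h1f, h1s⟩ := h1; obtain ⟨h2f, h2s⟩ := h2
  constructor
  · rw [Measure.map_add _ _ measurable_fst, Measure.map_smul, Measure.map_smul, h1f, h2f]
  · rw [Measure.map_add _ _ measurable_snd, Measure.map_smul, Measure.map_smul, h1s, h2s]

lemma lintegral_comb (a b : ℝ≥0∞) (γ1 γ2 : Measure X) (f : X → ℝ≥0∞) :
    ∫⁻ z, f z ∂(a • γ1 + b • γ2) = a * ∫⁻ z, f z ∂γ1 + b * ∫⁻ z, f z ∂γ2 := by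
  rw [lintegral_add_measure, lintegral_smul_measure, lintegral_smul_measure]
  simp only [smul_eq_mul]

end Aux

section MetricAux

variable {X : Type*} [MetricSpace X] [MeasurableSpace X] [BorelSpace X]

/-- `Wp^p` is the transport-cost infimum itself. -/
lemma wp_pow {p : ℝ} (hp : 1 ≤ p) (μ ν : Measure X) :
    Wp p μ ν ^ p
      = ⨅ (γ : Measure (X × X)) (_ : IsCoupling γ μ ν), ∫⁻ z, edist z.1 z.2 ^ p ∂γ := by
  rw [Wp, ← ENNReal.rpow_mul, one_div_mul_cancel (by linarith), ENNReal.rpow_one]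

/-- The key Wasserstein inequality at the level of transport costs. -/
lemma wp_ineq {p : ℝ} (hp : 1 ≤ p) (μ μ' ν ν' : Measure X)
    [IsProbabilityMeasure μ] [IsProbabilityMeasure μ'] [IsProbabilityMeasure ν]
    [IsProbabilityMeasure ν'] {r : ℝ} (hr : r ∈ Set.Icc (0 : ℝ) 1) :
    Wp p (mcomb r μ ν) (mcomb r μ' ν') ^ p
      ≤ ENNReal.ofReal r * Wp p μ μ' ^ p + ENNReal.ofReal (1 - r) * Wp p ν ν' ^ p := by
  set a := ENNReal.ofReal r with ha
  set b := ENNReal.ofReal (1 - r) with hb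
  have ha' : a ≠ ⊤ := ENNReal.ofReal_ne_top
  have hb' : b ≠ ⊤ := ENNReal.ofReal_ne_top
  rw [wp_pow hp, wp_pow hp, wp_pow hp]
  set J : Measure (X × X) → ℝ≥0∞ := fun γ => ∫⁻ z, edist z.1 z.2 ^ p ∂γ with hJ
  have hsub1 : (⨅ (γ : Measure (X × X)) (_ : IsCoupling γ μ μ'), J γ)
      = ⨅ γ : {γ : Measure (X × X) // IsCoupling γ μ μ'}, J γ.1 := by rw [iInf_subtype]
  have hsub2 : (⨅ (γ : Measure (X × X)) (_ : IsCoupling γ ν ν'), J γ)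
      = ⨅ γ : {γ : Measure (X × X) // IsCoupling γ ν ν'}, J γ.1 := by rw [iInf_subtype]
  haveI : Nonempty {γ : Measure (X × X) // IsCoupling γ μ μ'} :=
    ⟨⟨μ.prod μ', isCoupling_prod μ μ'⟩⟩
  haveI : Nonempty {γ : Measure (X × X) // IsCoupling γ ν ν'} :=
    ⟨⟨ν.prod ν', isCoupling_prod ν ν'⟩⟩
  rw [hsub1, hsub2, ENNReal.mul_iInf (fun h => absurd h ha'),
    ENNReal.mul_iInf (fun h => absurd h hb'), ENNReal.iInf_add]
  simp_rw [ENNReal.add_iInf]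
  refine le_iInf fun γ1 => le_iInf fun γ2 => ?_
  have hc : IsCoupling (a • γ1.1 + b • γ2.1) (mcomb r μ ν) (mcomb r μ' ν') :=
    isCoupling_comb a b γ1.2 γ2.2
  calc (⨅ (γ : Measure (X × X)) (_ : IsCoupling γ (mcomb r μ ν) (mcomb r μ' ν')), J γ)
      ≤ J (a • γ1.1 + b • γ2.1) := iInf₂_le (a • γ1.1 + b • γ2.1) hc
    _ = a * J γ1.1 + b * J γ2.1 := lintegral_comb a b _ _ _

/-- Shifting the basepoint preserves finiteness of the `p`-th moment
(for finite measures). -/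
lemma moment_shift {p : ℝ} (hp : 1 ≤ p) (ν : Measure X) [IsFiniteMeasure ν]
    (x₀ x₁ : X) (h : ∫⁻ x, edist x₁ x ^ p ∂ν ≠ ⊤) :
    ∫⁻ x, edist x₀ x ^ p ∂ν ≠ ⊤ := by
  have hp0 : (0 : ℝ) ≤ p := by linarith
  have hbound : ∀ x : X,
      edist x₀ x ^ p ≤ 2 ^ p * (edist x₀ x₁ ^ p + edist x₁ x ^ p) := by
    intro x
    have h1 : edist x₀ x ≤ 2 * max (edist x₀ x₁) (edist x₁ x) := by
      refine (edist_triangle x₀ x₁ x).trans ?_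
      rw [two_mul]
      exact add_le_add (le_max_left _ _) (le_max_right _ _)
    have h2 : edist x₀ x ^ p ≤ (2 * max (edist x₀ x₁) (edist x₁ x)) ^ p :=
      ENNReal.rpow_le_rpow h1 hp0
    rw [ENNReal.mul_rpow_of_nonneg _ _ hp0] at h2
    refine h2.trans (mul_le_mul_right ?_ _)
    rcases le_total (edist x₀ x₁) (edist x₁ x) with hle | hle
    · rw [max_eq_right hle]; exact le_add_self
    · rw [max_eq_left hle]; exact le_self_add
  have h2p : (2 : ℝ≥0∞) ^ p ≠ ⊤ := ENNReal.rpow_ne_top_of_nonneg hp0 (by norm_num)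
  have hed : edist x₀ x₁ ^ p ≠ ⊤ :=
    ENNReal.rpow_ne_top_of_nonneg hp0 (edist_ne_top x₀ x₁)
  have : ∫⁻ x, edist x₀ x ^ p ∂ν
      ≤ 2 ^ p * (edist x₀ x₁ ^ p * ν Set.univ + ∫⁻ x, edist x₁ x ^ p ∂ν) := by
    calc ∫⁻ x, edist x₀ x ^ p ∂ν
        ≤ ∫⁻ x, 2 ^ p * (edist x₀ x₁ ^ p + edist x₁ x ^ p) ∂ν := lintegral_mono hbound
      _ = 2 ^ p * ∫⁻ x, (edist x₀ x₁ ^ p + edist x₁ x ^ p) ∂ν :=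
          lintegral_const_mul' _ _ h2p
      _ = 2 ^ p * (edist x₀ x₁ ^ p * ν Set.univ + ∫⁻ x, edist x₁ x ^ p ∂ν) := by
          rw [lintegral_add_left measurable_const, lintegral_const]
  refine ne_top_of_le_ne_top ?_ this
  exact ENNReal.mul_ne_top h2p (ENNReal.add_ne_top.2
    ⟨ENNReal.mul_ne_top hed (measure_ne_top ν _), h⟩)

lemma hasFiniteMoment_comb {p : ℝ} (hp : 1 ≤ p) {μ ν : Measure X}
    [IsFiniteMeasure μ] [IsFiniteMeasure ν] {r : ℝ}
    (hμ : HasFiniteMoment p μ) (hν : HasFiniteMoment p ν) :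
    HasFiniteMoment p (mcomb r μ ν) := by
  obtain ⟨x₀, hx₀⟩ := hμ
  obtain ⟨x₁, hx₁⟩ := hν
  have hν' : ∫⁻ x, edist x₀ x ^ p ∂ν ≠ ⊤ := moment_shift hp ν x₀ x₁ hx₁
  refine ⟨x₀, ?_⟩
  rw [mcomb, lintegral_comb]
  exact ENNReal.add_ne_top.2
    ⟨ENNReal.mul_ne_top ENNReal.ofReal_ne_top hx₀,
     ENNReal.mul_ne_top ENNReal.ofReal_ne_top hν'⟩

lemma isRadon_comb (a b : ℝ≥0∞) {μ ν : Measure X}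
    (hμ : IsRadon μ) (hν : IsRadon ν) : IsRadon (a • μ + b • ν) := by
  intro B hB
  have happly : ∀ S : Set X, (a • μ + b • ν) S = a * μ S + b * ν S := fun S => by
    simp [Measure.add_apply, Measure.smul_apply, smul_eq_mul]
  have hμB : μ B = ⨆ K, ⨆ _ : IsCompact K ∧ K ⊆ B, μ K := by
    rw [hμ B hB]; simp_rw [iSup_and]
  have hνB : ν B = ⨆ K, ⨆ _ : IsCompact K ∧ K ⊆ B, ν K := by
    rw [hν B hB]; simp_rw [iSup_and]
  have target : (⨆ (K : Set X) (_ : IsCompact K) (_ : K ⊆ B), (a • μ + b • ν) K)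
      = ⨆ K, ⨆ _ : IsCompact K ∧ K ⊆ B, (a * μ K + b * ν K) := by
    simp_rw [iSup_and, happly]
  rw [happly B, hμB, hνB, target, ENNReal.mul_iSup, ENNReal.mul_iSup]
  simp_rw [ENNReal.mul_iSup]
  have hne : ∃ K : Set X, IsCompact K ∧ K ⊆ B := ⟨∅, isCompact_empty, Set.empty_subset B⟩
  apply le_antisymm
  · refine ENNReal.biSup_add_biSup_le' hne hne fun K1 h1 K2 h2 => ?_
    have hK : IsCompact (K1 ∪ K2) ∧ K1 ∪ K2 ⊆ B :=
      ⟨h1.1.union h2.1, Set.union_subset h1.2 h2.2⟩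
    calc a * μ K1 + b * ν K2
        ≤ a * μ (K1 ∪ K2) + b * ν (K1 ∪ K2) :=
          add_le_add (mul_le_mul_right (measure_mono Set.subset_union_left) a)
            (mul_le_mul_right (measure_mono Set.subset_union_right) b)
      _ ≤ _ := le_iSup₂ (f := fun K (_ : IsCompact K ∧ K ⊆ B) => a * μ K + b * ν K) (K1 ∪ K2) hK
  · refine iSup_le fun K => iSup_le fun hK => ?_
    exact add_le_add
      (le_iSup₂ (f := fun K (_ : IsCompact K ∧ K ⊆ B) => a * μ K) K hK)
      (le_iSup₂ (f := fun K (_ : IsCompact K ∧ K ⊆ B) => b * ν K) K hK)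

lemma isProbability_comb {μ ν : Measure X} [IsProbabilityMeasure μ]
    [IsProbabilityMeasure ν] {r : ℝ} (hr : r ∈ Set.Icc (0 : ℝ) 1) :
    IsProbabilityMeasure (mcomb r μ ν) := by
  constructor
  rw [mcomb, Measure.add_apply, Measure.smul_apply, Measure.smul_apply,
    smul_eq_mul, smul_eq_mul, measure_univ, measure_univ, mul_one, mul_one,
    ← ENNReal.ofReal_add hr.1 (by linarith [hr.2])]
  norm_num

lemma inPp_comb {p : ℝ} (hp : 1 ≤ p) {μ ν : Measure X}
    (hμ : InPp p μ) (hν : InPp p ν) {r : ℝ} (hr : r ∈ Set.Icc (0 : ℝ) 1) :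
    InPp p (mcomb r μ ν) := by
  haveI := hμ.1; haveI := hν.1
  exact ⟨isProbability_comb hr, isRadon_comb _ _ hμ.2.1 hν.2.1,
    hasFiniteMoment_comb hp hμ.2.2 hν.2.2⟩

end MetricAux

/-- `P_p(X)` with the pointwise convex combinations is a Wasserstein
barycentric algebra of order `p`: the Wasserstein condition
`W_p(μ +_r ν, μ' +_r ν')^p ≤ r·W_p(μ,μ')^p + (1−r)·W_p(ν,ν')^p` holds,
`P_p(X)` is closed under the operations, and the barycentric laws
(B1), (B2), (SC), (SA) hold. -/
theorem pp_is_wasserstein_algebra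
    {X : Type*} [MetricSpace X] [MeasurableSpace X] [BorelSpace X]
    {p : ℝ} (hp : 1 ≤ p) :
    (∀ μ μ' ν ν' : Measure X, InPp p μ → InPp p μ' → InPp p ν → InPp p ν' →
      ∀ r ∈ Set.Icc (0 : ℝ) 1,
        Wp p (mcomb r μ ν) (mcomb r μ' ν') ^ p
          ≤ ENNReal.ofReal r * Wp p μ μ' ^ p
            + ENNReal.ofReal (1 - r) * Wp p ν ν' ^ p) ∧
    (∀ μ ν : Measure X, InPp p μ → InPp p ν → ∀ r ∈ Set.Icc (0 : ℝ) 1,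
      InPp p (mcomb r μ ν)) ∧
    (∀ μ ν : Measure X, InPp p μ → InPp p ν → mcomb 1 μ ν = μ) ∧
    (∀ μ : Measure X, InPp p μ → ∀ r ∈ Set.Icc (0 : ℝ) 1, mcomb r μ μ = μ) ∧
    (∀ μ ν : Measure X, InPp p μ → InPp p ν → ∀ r ∈ Set.Icc (0 : ℝ) 1,
      mcomb r μ ν = mcomb (1 - r) ν μ) ∧
    (∀ μ ν ω : Measure X, InPp p μ → InPp p ν → InPp p ω →
      ∀ q ∈ Set.Icc (0 : ℝ) 1, ∀ r ∈ Set.Icc (0 : ℝ) 1, q < 1 → r < 1 →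
        mcomb r (mcomb q μ ν) ω
          = mcomb (q * r) μ (mcomb ((r - q * r) / (1 - q * r)) ν ω)) := by
  refine ⟨?_, ?_, ?_, ?_, ?_, ?_⟩
  · -- Wasserstein inequality
    intro μ μ' ν ν' hμ hμ' hν hν' r hr
    haveI := hμ.1; haveI := hμ'.1; haveI := hν.1; haveI := hν'.1
    exact wp_ineq hp μ μ' ν ν' hr
  · -- closure
    intro μ ν hμ hν r hr
    exact inPp_comb hp hμ hν hr
  · -- (B1)
    intro μ ν _ _
    simp [mcomb]
  · -- (B2)
    intro μ _ r hr
    rw [mcomb, ← add_smul, ← ENNReal.ofReal_add hr.1 (by linarith [hr.2])]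
    norm_num
  · -- (SC)
    intro μ ν _ _ r hr
    rw [mcomb, mcomb, add_comm, sub_sub_cancel]
  · -- (SA)
    intro μ ν ω _ _ _ q hq r hr hq1 hr1
    have hqr : q * r ≤ q := mul_le_of_le_one_right hq.1 hr.2
    have hqr1 : q * r < 1 := lt_of_le_of_lt hqr hq1
    have hpos : (0 : ℝ) < 1 - q * r := by linarith
    set s : ℝ := (r - q * r) / (1 - q * r) with hs
    have hA1 : ENNReal.ofReal r * ENNReal.ofReal q = ENNReal.ofReal (q * r) := by
      rw [ENNReal.ofReal_mul hq.1, mul_comm]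
    have hA2 : ENNReal.ofReal r * ENNReal.ofReal (1 - q)
        = ENNReal.ofReal (1 - q * r) * ENNReal.ofReal s := by
      rw [← ENNReal.ofReal_mul hr.1, ← ENNReal.ofReal_mul hpos.le]
      congr 1
      rw [hs]
      rw [mul_div_assoc', eq_div_iff hpos.ne']
      ring
    have hA3 : ENNReal.ofReal (1 - r)
        = ENNReal.ofReal (1 - q * r) * ENNReal.ofReal (1 - s) := by
      rw [← ENNReal.ofReal_mul hpos.le]
      congr 1
      rw [hs]
      rw [one_sub_div hpos.ne', mul_div_assoc', eq_div_iff hpos.ne']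
      ring
    simp only [mcomb, smul_add, smul_smul]
    rw [hA1, hA2, hA3, add_assoc]
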